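/- arXiv:2207.08573 — 2 statements merged into one kernel-verified Lean document; each statement's English description precedes it below -/
import Mathlib

section
/- Let n ≥ 3 and let f_{k,ℓ} = ((M')^{-1} N M')_{k,ℓ} as above, with k > ℓ+1. With respect to the lexicographic order on K[x_{i,j}] induced by x_{i,j} > x_{i',j'} iff i < i' or (i = i' and j < j'), the leading term of f_{k,ℓ} is −x_{n+1−k, ℓ+1}. -/
open MvPolynomial

/-- The generic antidiagonal-unipotent `n × n` matrix `M'` (the matrix `w₀M`):
indeterminates `x_{i,j}` above the antidiagonal, `1`'s on the antidiagonal,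
`0`'s below. -/
noncomputable def genM (K : Type*) [Field K] (n : ℕ) :
    Matrix (Fin n) (Fin n) (MvPolynomial (Fin n × Fin n) K) := fun i j =>
  if (i : ℕ) + (j : ℕ) < n - 1 then MvPolynomial.X (i, j)
  else if (i : ℕ) + (j : ℕ) = n - 1 then 1 else 0

/-- The regular nilpotent Jordan matrix `N`, with `1`'s on the superdiagonal. -/
noncomputable def nilpMat (K : Type*) [Field K] (n : ℕ) :
    Matrix (Fin n) (Fin n) (MvPolynomial (Fin n × Fin n) K) := fun i j =>
  if (j : ℕ) = (i : ℕ) + 1 then 1 else 0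

/-- The matrix `(M')⁻¹ N M'`, whose `(k,ℓ)` entry is the polynomial `f_{k,ℓ}`. -/
noncomputable def hessMat (K : Type*) [Field K] (n : ℕ) :
    Matrix (Fin n) (Fin n) (MvPolynomial (Fin n × Fin n) K) :=
  (genM K n)⁻¹ * nilpMat K n * genM K n

/-- The rank of the variable `x_{i,j}`: variables are ordered by rows then columns,
a smaller rank meaning a more significant (larger) variable.  This realizes the
ordering `x_{i,j} > x_{i',j'}` iff `i < i'`, or `i = i'` and `j < j'`. -/
def varRank (n : ℕ) (v : Fin n × Fin n) : ℕ := (v.1 : ℕ) * n + (v.2 : ℕ)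

/-- The lexicographic order on monomials of `K[x_{i,j}]` induced by the variable
ordering above: `m ≤ m'` iff `m = m'` or at the most significant variable where
they differ, `m` has the smaller exponent. -/
def lexLE (n : ℕ) (m m' : (Fin n × Fin n) →₀ ℕ) : Prop :=
  m = m' ∨ ∃ v, m v < m' v ∧ ∀ w, varRank n w < varRank n v → m w = m' w

/-- `m` is the leading monomial of `f` with respect to `le`. -/
def IsLeadMono {K : Type*} [Field K] {n : ℕ}
    (le : ((Fin n × Fin n) →₀ ℕ) → ((Fin n × Fin n) →₀ ℕ) → Prop)
    (f : MvPolynomial (Fin n × Fin n) K) (m : (Fin n × Fin n) →₀ ℕ) : Prop :=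
  m ∈ f.support ∧ ∀ m' ∈ f.support, le m' m

lemma isUnit_det_genM (K : Type*) [Field K] (n : ℕ) : IsUnit (genM K n).det := by
  have htri : ((genM K n).submatrix Fin.revPerm id).BlockTriangular OrderDual.toDual := by
    intro i j hij
    have hij' : (i : ℕ) < (j : ℕ) := hij
    have hi := i.isLt
    simp only [Matrix.submatrix_apply, id_eq, Fin.revPerm_apply]
    have hrv : ((Fin.rev i : Fin n) : ℕ) = n - (i + 1) := Fin.val_rev i
    unfold genM
    rw [if_neg (by omega), if_neg (by omega)]
  have hdet : ((genM K n).submatrix Fin.revPerm id).det = 1 := by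
    rw [Matrix.det_of_lowerTriangular _ htri]
    apply Finset.prod_eq_one
    intro i _
    have hi := i.isLt
    have hrv : ((Fin.rev i : Fin n) : ℕ) = n - (i + 1) := Fin.val_rev i
    simp only [Matrix.submatrix_apply, id_eq, Fin.revPerm_apply]
    unfold genM
    rw [if_neg (by omega), if_pos (by omega)]
  rw [Matrix.det_permute] at hdet
  exact isUnit_of_mul_isUnit_right (hdet ▸ isUnit_one)

lemma genM_mul_hessMat (K : Type*) [Field K] (n : ℕ) :
    genM K n * hessMat K n = nilpMat K n * genM K n := by
  unfold hessMat
  rw [← Matrix.mul_assoc, ← Matrix.mul_assoc,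
    Matrix.mul_nonsing_inv _ (isUnit_det_genM K n), Matrix.one_mul]

section Aux
variable {K : Type*} [Field K] {n : ℕ}

lemma nilp_mul_genM_apply (i j : Fin n) :
    (nilpMat K n * genM K n) i j
      = if h : (i : ℕ) + 1 < n then genM K n ⟨i + 1, h⟩ j else 0 := by
  rw [Matrix.mul_apply]
  split
  · rename_i h
    rw [Finset.sum_eq_single (⟨(i:ℕ)+1, h⟩ : Fin n)]
    · unfold nilpMat; rw [if_pos rfl, one_mul]
    · intro t _ ht
      unfold nilpMat
      rw [if_neg (fun hc => ht (Fin.ext hc)), zero_mul]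
    · intro h; exact absurd (Finset.mem_univ _) h
  · rename_i h
    apply Finset.sum_eq_zero
    intro t _
    unfold nilpMat
    rw [if_neg (by have := t.isLt; omega), zero_mul]

lemma hess_rec (j : ℕ) (hj : j < n) (Λf : Fin n) :
    hessMat K n ⟨j, hj⟩ Λf
      = (nilpMat K n * genM K n) ⟨n - 1 - j, by omega⟩ Λf
        - ∑ t ∈ Finset.univ.filter (fun t : Fin n => (t : ℕ) < j),
            X ((⟨n - 1 - j, by omega⟩ : Fin n), t) * hessMat K n t Λf := by
  have key := congrFun (congrFun (genM_mul_hessMat K n) (⟨n - 1 - j, by omega⟩ : Fin n)) Λf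
  rw [Matrix.mul_apply] at key
  have hsplit : ∀ t : Fin n,
      genM K n ⟨n - 1 - j, by omega⟩ t * hessMat K n t Λf
        = (if t = (⟨j, hj⟩ : Fin n) then hessMat K n t Λf else 0)
          + (if (t : ℕ) < j then X ((⟨n - 1 - j, by omega⟩ : Fin n), t) * hessMat K n t Λf
             else 0) := by
    intro t
    have ht := t.isLt
    by_cases h1 : (t : ℕ) < j
    · unfold genM
      rw [if_pos (by simp only; omega), if_neg (by intro hc; rw [hc] at h1; exact absurd h1 (by simp)), if_pos h1, zero_add]
    · by_cases h2 : (t : ℕ) = j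
      · unfold genM
        rw [if_neg (by simp only; omega), if_pos (by simp only; omega),
          if_pos (Fin.ext h2), if_neg h1, one_mul, add_zero]
      · unfold genM
        rw [if_neg (by simp only; omega), if_neg (by simp only; omega),
          if_neg (fun hc => h2 (congrArg Fin.val hc)), if_neg h1, zero_mul, add_zero]
  rw [Finset.sum_congr rfl (fun t _ => hsplit t), Finset.sum_add_distrib,
    Finset.sum_ite_eq' Finset.univ (⟨j, hj⟩ : Fin n), if_pos (Finset.mem_univ _),
    ← Finset.sum_filter] at key
  rw [← key]
  ring

end Aux

def stmtP {K : Type*} [Field K] {n : ℕ} (Λ : ℕ) (hΛ : Λ + 2 ≤ n) (j : Fin n) : Prop :=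
  (((j : ℕ) ≤ Λ) → hessMat K n j ⟨Λ, by omega⟩ = 0) ∧
  (((j : ℕ) = Λ + 1) → hessMat K n j ⟨Λ, by omega⟩ = 1) ∧
  ((Λ + 2 ≤ (j : ℕ)) →
    coeff (Finsupp.single ((⟨n - 1 - (j : ℕ), by omega⟩ : Fin n),
          (⟨Λ + 1, by omega⟩ : Fin n)) 1) (hessMat K n j ⟨Λ, by omega⟩) = -1 ∧
    ∀ m ∈ (hessMat K n j ⟨Λ, by omega⟩).support,
      m = Finsupp.single ((⟨n - 1 - (j : ℕ), by omega⟩ : Fin n),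
            (⟨Λ + 1, by omega⟩ : Fin n)) 1 ∨
      ∀ w ∈ m.support,
        (n - 1 - (j : ℕ)) * n + (Λ + 1) < (w.1 : ℕ) * n + (w.2 : ℕ))

lemma main_ind {K : Type*} [Field K] {n : ℕ} (hn : 3 ≤ n) (Λ : ℕ) (hΛ : Λ + 2 ≤ n) :
    ∀ j : Fin n, stmtP (K := K) Λ hΛ j := by
  suffices H : ∀ N : ℕ, ∀ j : Fin n, (j : ℕ) < N → stmtP (K := K) Λ hΛ j by
    exact fun j => H ((j : ℕ) + 1) j (by omega)
  intro N
  induction N with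
  | zero => exact fun j h => absurd h (Nat.not_lt_zero _)
  | succ N IHN =>
  intro j hjN
  have IH : ∀ t : Fin n, t < j → stmtP (K := K) Λ hΛ t := by
    intro t ht
    exact IHN t (by have := Fin.lt_def.mp ht; omega)
  have hjn := j.isLt
  have hrec := hess_rec (K := K) (j : ℕ) j.isLt (⟨Λ, by omega⟩ : Fin n)
  rw [Fin.eta] at hrec
  have hzero : ∀ t : Fin n, t < j → (t : ℕ) ≤ Λ →
      hessMat K n t (⟨Λ, by omega⟩ : Fin n) = 0 := fun t ht htΛ => (IH t ht).1 htΛ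
  refine ⟨?_, ?_, ?_⟩
  · -- case j ≤ Λ : f = 0
    intro hjΛ
    rw [hrec, nilp_mul_genM_apply]
    have hsum : ∀ t ∈ Finset.univ.filter (fun t : Fin n => (t : ℕ) < (j : ℕ)),
        X ((⟨n - 1 - (j : ℕ), by omega⟩ : Fin n), t) * hessMat K n t (⟨Λ, by omega⟩ : Fin n)
          = 0 := by
      intro t ht
      have ht' : (t : ℕ) < (j : ℕ) := (Finset.mem_filter.mp ht).2
      rw [hzero t (Fin.lt_def.mpr ht') (by omega), mul_zero]
    rw [Finset.sum_eq_zero hsum, sub_zero]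
    split
    · rename_i h
      unfold genM
      rw [if_neg (by exact (by omega : ¬(n - 1 - (j : ℕ) + 1 + Λ < n - 1))),
        if_neg (by exact (by omega : ¬(n - 1 - (j : ℕ) + 1 + Λ = n - 1)))]
    · rfl
  · -- case j = Λ + 1 : f = 1
    intro hjΛ
    rw [hrec, nilp_mul_genM_apply]
    have hsum : ∀ t ∈ Finset.univ.filter (fun t : Fin n => (t : ℕ) < (j : ℕ)),
        X ((⟨n - 1 - (j : ℕ), by omega⟩ : Fin n), t) * hessMat K n t (⟨Λ, by omega⟩ : Fin n)
          = 0 := by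
      intro t ht
      have ht' : (t : ℕ) < (j : ℕ) := (Finset.mem_filter.mp ht).2
      rw [hzero t (Fin.lt_def.mpr ht') (by omega), mul_zero]
    rw [Finset.sum_eq_zero hsum, sub_zero]
    rw [dif_pos (by omega : n - 1 - (j : ℕ) + 1 < n)]
    unfold genM
    rw [if_neg (by exact (by omega : ¬(n - 1 - (j : ℕ) + 1 + Λ < n - 1))),
      if_pos (by exact (by omega : n - 1 - (j : ℕ) + 1 + Λ = n - 1))]
  · -- main case
    intro hjΛ
    classical
    have hA : (nilpMat K n * genM K n) (⟨n - 1 - (j : ℕ), by omega⟩ : Fin n)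
          (⟨Λ, by omega⟩ : Fin n)
        = X ((⟨n - 1 - (j : ℕ) + 1, by omega⟩ : Fin n), (⟨Λ, by omega⟩ : Fin n)) := by
      rw [nilp_mul_genM_apply]
      simp only [Fin.val_mk]
      rw [dif_pos (by omega : n - 1 - (j : ℕ) + 1 < n)]
      unfold genM
      simp only [Fin.val_mk]
      rw [if_pos (by omega : n - 1 - (j : ℕ) + 1 + Λ < n - 1)]
    rw [hA] at hrec
    have hone : hessMat K n (⟨Λ + 1, by omega⟩ : Fin n) (⟨Λ, by omega⟩ : Fin n) = 1 := by
      refine (IH (⟨Λ + 1, by omega⟩ : Fin n) (Fin.lt_def.mpr ?_)).2.1 rfl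
      simp only [Fin.val_mk]; omega
    have hXane : ((⟨n - 1 - (j : ℕ) + 1, by omega⟩ : Fin n), (⟨Λ, by omega⟩ : Fin n))
        ≠ ((⟨n - 1 - (j : ℕ), by omega⟩ : Fin n), (⟨Λ + 1, by omega⟩ : Fin n)) := by
      intro hc
      have h2 : n - 1 - (j : ℕ) + 1 = n - 1 - (j : ℕ) := congrArg (fun p => ((p.1 : Fin n) : ℕ)) hc
      omega
    constructor
    · -- the coefficient is -1
      rw [hrec, coeff_sub]
      have h1 : coeff (Finsupp.single ((⟨n - 1 - (j : ℕ), by omega⟩ : Fin n),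
            (⟨Λ + 1, by omega⟩ : Fin n)) 1)
          (X ((⟨n - 1 - (j : ℕ) + 1, by omega⟩ : Fin n), (⟨Λ, by omega⟩ : Fin n))
            : MvPolynomial (Fin n × Fin n) K) = 0 := by
        rw [coeff_X', if_neg]
        intro hc
        exact hXane ((Finsupp.single_left_inj one_ne_zero).mp hc)
      have h2 : coeff (Finsupp.single ((⟨n - 1 - (j : ℕ), by omega⟩ : Fin n),
            (⟨Λ + 1, by omega⟩ : Fin n)) 1)
          (∑ t ∈ Finset.univ.filter (fun t : Fin n => (t : ℕ) < (j : ℕ)),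
            X ((⟨n - 1 - (j : ℕ), by omega⟩ : Fin n), t)
              * hessMat K n t (⟨Λ, by omega⟩ : Fin n)) = 1 := by
        rw [coeff_sum]
        rw [Finset.sum_eq_single_of_mem (⟨Λ + 1, by omega⟩ : Fin n)
          (by rw [Finset.mem_filter]
              exact ⟨Finset.mem_univ _, by simp only [Fin.val_mk]; omega⟩)]
        · rw [hone, mul_one, coeff_X', if_pos rfl]
        · intro t htT hne
          have ht' : (t : ℕ) < (j : ℕ) := (Finset.mem_filter.mp htT).2
          by_cases hle : (t : ℕ) ≤ Λ
          · rw [hzero t (Fin.lt_def.mpr ht') hle, mul_zero, coeff_zero]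
          · have ht2 : Λ + 2 ≤ (t : ℕ) := by
              rcases Nat.lt_or_ge (t : ℕ) (Λ + 2) with h | h
              · exfalso; apply hne; apply Fin.ext; simp only [Fin.val_mk]; omega
              · exact h
            rw [coeff_X_mul', if_neg]
            intro hmem
            rw [Finsupp.support_single_ne_zero _ one_ne_zero,
              Finset.mem_singleton] at hmem
            have h3 : (t : ℕ) = Λ + 1 := by
              have := congrArg (fun p => ((p.2 : Fin n) : ℕ)) hmem
              simpa using this
            omega
      rw [h1, h2]
      norm_num
    · -- the support condition
      intro m hm
      rw [hrec, mem_support_iff, coeff_sub] at hm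
      have hcases : coeff m (X ((⟨n - 1 - (j : ℕ) + 1, by omega⟩ : Fin n),
            (⟨Λ, by omega⟩ : Fin n)) : MvPolynomial (Fin n × Fin n) K) ≠ 0 ∨
          coeff m (∑ t ∈ Finset.univ.filter (fun t : Fin n => (t : ℕ) < (j : ℕ)),
            X ((⟨n - 1 - (j : ℕ), by omega⟩ : Fin n), t)
              * hessMat K n t (⟨Λ, by omega⟩ : Fin n)) ≠ 0 := by
        by_contra h
        push_neg at h
        rw [h.1, h.2, sub_zero] at hm
        exact hm rfl
      rcases hcases with hXa | hS
      · -- m comes from X a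
        rw [coeff_X'] at hXa
        have hma : Finsupp.single ((⟨n - 1 - (j : ℕ) + 1, by omega⟩ : Fin n),
            (⟨Λ, by omega⟩ : Fin n)) 1 = m := by
          by_contra hc
          rw [if_neg hc] at hXa
          exact hXa rfl
        right
        intro w hw
        rw [← hma, Finsupp.support_single_ne_zero _ one_ne_zero,
          Finset.mem_singleton] at hw
        subst hw
        simp only [Fin.val_mk]
        have e2 : (n - 1 - (j : ℕ) + 1) * n = (n - 1 - (j : ℕ)) * n + n := by ring
        omega
      · -- m comes from the sum
        have hmS := MvPolynomial.support_sum (mem_support_iff.mpr hS)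
        obtain ⟨t, htT, hmt⟩ := Finset.mem_biUnion.mp hmS
        have ht' : (t : ℕ) < (j : ℕ) := (Finset.mem_filter.mp htT).2
        by_cases hle : (t : ℕ) ≤ Λ
        · rw [hzero t (Fin.lt_def.mpr ht') hle, mul_zero] at hmt
          simp at hmt
        by_cases heq : (t : ℕ) = Λ + 1
        · rw [(IH t (Fin.lt_def.mpr ht')).2.1 heq, mul_one, support_X,
            Finset.mem_singleton] at hmt
          left
          rw [hmt]
          congr 1
          exact Prod.ext rfl (Fin.ext heq)
        · have ht2 : Λ + 2 ≤ (t : ℕ) := by omega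
          rw [support_X_mul] at hmt
          obtain ⟨m', hm', hmm⟩ := Finset.mem_map.mp hmt
          right
          intro w hw
          rw [← hmm] at hw
          have hw' : Finsupp.single ((⟨n - 1 - (j : ℕ), by omega⟩ : Fin n), t) 1 w
              + m' w ≠ 0 := by
            have h4 := Finsupp.mem_support_iff.mp hw
            simpa [addLeftEmbedding_apply, Finsupp.add_apply] using h4
          by_cases hwu : w = ((⟨n - 1 - (j : ℕ), by omega⟩ : Fin n), t)
          · subst hwu
            simp only [Fin.val_mk]
            omega
          · have hwm' : m' w ≠ 0 := by
              intro h0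
              apply hw'
              rw [Finsupp.single_eq_of_ne' (fun h => hwu h.symm), h0, add_zero]
            rcases ((IH t (Fin.lt_def.mpr ht')).2.2 ht2).2 m' hm' with hm0 | hrank
            · have hw2 : w = ((⟨n - 1 - (t : ℕ), by omega⟩ : Fin n),
                  (⟨Λ + 1, by omega⟩ : Fin n)) := by
                rw [hm0] at hwm'
                exact (Finsupp.single_apply_ne_zero.mp hwm').1
              subst hw2
              simp only [Fin.val_mk]
              have hlt : (n - 1 - (j : ℕ)) * n < (n - 1 - (t : ℕ)) * n :=
                mul_lt_mul_of_pos_right (by omega) (by omega)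
              omega
            · have h5 := hrank w (Finsupp.mem_support_iff.mpr hwm')
              have hle2 : (n - 1 - (j : ℕ)) * n ≤ (n - 1 - (t : ℕ)) * n :=
                Nat.mul_le_mul_right _ (by omega)
              omega

/-- For 1-indexed `k, ℓ` with `ℓ + 1 < k ≤ n`, `1 ≤ ℓ`, the leading
term of `f_{k,ℓ}` with respect to the lexicographic order above is
`-x_{n+1-k, ℓ+1}`: its leading monomial is the (0-indexed) variable `(n-k, ℓ)`,
occurring with coefficient `-1`. -/
theorem stmt7 {K : Type*} [Field K] {n : ℕ} (hn : 3 ≤ n)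
    (k l : ℕ) (hl1 : 1 ≤ l) (hlk : l + 1 < k) (hkn : k ≤ n) :
    IsLeadMono (lexLE n) (hessMat K n ⟨k - 1, by omega⟩ ⟨l - 1, by omega⟩)
      (Finsupp.single ((⟨n - k, by omega⟩ : Fin n), (⟨l, by omega⟩ : Fin n)) 1) ∧
    MvPolynomial.coeff
      (Finsupp.single ((⟨n - k, by omega⟩ : Fin n), (⟨l, by omega⟩ : Fin n)) 1)
      (hessMat K n ⟨k - 1, by omega⟩ ⟨l - 1, by omega⟩) = -1 := by
  have hΛ : (l - 1) + 2 ≤ n := by omega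
  obtain ⟨hc, hsupp⟩ := (main_ind (K := K) hn (l - 1) hΛ (⟨k - 1, by omega⟩ : Fin n)).2.2
    (by simp only [Fin.val_mk]; omega)
  simp only [Fin.val_mk] at hc hsupp
  have hvar : ((⟨n - 1 - (k - 1), by omega⟩ : Fin n), (⟨l - 1 + 1, by omega⟩ : Fin n))
      = ((⟨n - k, by omega⟩ : Fin n), (⟨l, by omega⟩ : Fin n)) :=
    Prod.ext (Fin.ext (by simp only [Fin.val_mk]; omega))
      (Fin.ext (by simp only [Fin.val_mk]; omega))
  rw [hvar] at hc hsupp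
  have hprod : (n - 1 - (k - 1)) * n = (n - k) * n := by
    rw [show n - 1 - (k - 1) = n - k by omega]
  refine ⟨⟨MvPolynomial.mem_support_iff.mpr (by rw [hc]; exact neg_ne_zero.mpr one_ne_zero),
    ?_⟩, hc⟩
  intro m' hm'
  rcases hsupp m' hm' with h0 | hrank
  · exact Or.inl h0
  · right
    refine ⟨((⟨n - k, by omega⟩ : Fin n), (⟨l, by omega⟩ : Fin n)), ?_, ?_⟩
    · have hz : m' ((⟨n - k, by omega⟩ : Fin n), (⟨l, by omega⟩ : Fin n)) = 0 := by
        by_contra h0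
        have h6 := hrank _ (Finsupp.mem_support_iff.mpr h0)
        simp only [Fin.val_mk] at h6
        omega
      rw [hz, Finsupp.single_eq_same]
      omega
    · intro w hw
      simp only [varRank, Fin.val_mk] at hw
      have hzw : m' w = 0 := by
        by_contra h0
        have h6 := hrank _ (Finsupp.mem_support_iff.mpr h0)
        omega
      have hne : w ≠ ((⟨n - k, by omega⟩ : Fin n), (⟨l, by omega⟩ : Fin n)) := by
        intro hc2
        rw [hc2] at hw
        simp only [Fin.val_mk] at hw
        omega
      rw [hzw, Finsupp.single_eq_of_ne' (Ne.symm hne)]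
end

section
/- Let h: {1,...,n} → {1,...,n} be an indecomposable Hessenberg function (h(i) ≥ i+1 for all i < n, h nondecreasing, h(i) ≥ i), and let I_{w_0,h} = ⟨ f_{k,ℓ} : k > h(ℓ) ⟩ in K[x_{i,j} : i+j ≤ n], where f_{k,ℓ} = ((M')^{-1} N M')_{k,ℓ}. Then with respect to the lexicographic order with x_{i,j} > x_{i',j'} iff i < i' or (i = i' and j < j'), the set {f_{k,ℓ} : k > h(ℓ)} is a Gröbner basis of I_{w_0,h}, and in_<(I_{w_0,h}) = ⟨ x_{n+1−k, ℓ+1} : k > h(ℓ) ⟩ is an ideal generated by distinct indeterminates. -/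
open MvPolynomial

/-- The initial ideal of `I`: the ideal generated by the leading terms of the
(nonzero) elements of `I`. -/
noncomputable def initialIdeal {K : Type*} [Field K] {n : ℕ}
    (le : ((Fin n × Fin n) →₀ ℕ) → ((Fin n × Fin n) →₀ ℕ) → Prop)
    (I : Ideal (MvPolynomial (Fin n × Fin n) K)) : Ideal (MvPolynomial (Fin n × Fin n) K) :=
  Ideal.span {t | ∃ g ∈ I, ∃ m, IsLeadMono le g m ∧
    t = MvPolynomial.monomial m (MvPolynomial.coeff m g)}


namespace Stmt9


lemma varRank_inj {n : ℕ} {v w : Fin n × Fin n} (h : varRank n v = varRank n w) : v = w := by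
  obtain ⟨⟨a, ha⟩, ⟨b, hb⟩⟩ := v
  obtain ⟨⟨c, hc⟩, ⟨d, hd⟩⟩ := w
  simp only [varRank] at h
  have h1 : a = c := by
    rcases lt_trichotomy a c with h' | h' | h'
    · nlinarith
    · exact h'
    · nlinarith
  have h2 : b = d := by nlinarith
  simp only [Prod.mk.injEq, Fin.mk.injEq]
  exact ⟨h1, h2⟩

lemma lexLE_refl {n : ℕ} (m : (Fin n × Fin n) →₀ ℕ) : lexLE n m m := Or.inl rfl

lemma lexLE_trans {n : ℕ} {a b c : (Fin n × Fin n) →₀ ℕ}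
    (h1 : lexLE n a b) (h2 : lexLE n b c) : lexLE n a c := by
  rcases h1 with rfl | ⟨v1, hv1, hw1⟩
  · exact h2
  rcases h2 with rfl | ⟨v2, hv2, hw2⟩
  · exact Or.inr ⟨v1, hv1, hw1⟩
  rcases lt_trichotomy (varRank n v1) (varRank n v2) with h' | h' | h'
  · exact Or.inr ⟨v1, by rw [← hw2 v1 h']; exact hv1,
      fun w hw => (hw1 w hw).trans (hw2 w (hw.trans h'))⟩
  · rw [varRank_inj h'] at hv1 hw1
    exact Or.inr ⟨v2, hv1.trans hv2, fun w hw => (hw1 w hw).trans (hw2 w hw)⟩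
  · exact Or.inr ⟨v2, by rw [hw1 v2 h']; exact hv2,
      fun w hw => (hw1 w (hw.trans h')).trans (hw2 w hw)⟩

lemma lexLE_antisymm {n : ℕ} {a b : (Fin n × Fin n) →₀ ℕ}
    (h1 : lexLE n a b) (h2 : lexLE n b a) : a = b := by
  rcases h1 with rfl | ⟨v1, hv1, hw1⟩
  · rfl
  rcases h2 with rfl | ⟨v2, hv2, hw2⟩
  · rfl
  exfalso
  rcases lt_trichotomy (varRank n v1) (varRank n v2) with h' | h' | h'
  · rw [hw2 v1 h'] at hv1; omega
  · rw [varRank_inj h'] at hv1; omega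
  · rw [hw1 v2 h'] at hv2; omega

lemma lexLE_add {n : ℕ} {a b c d : (Fin n × Fin n) →₀ ℕ}
    (h1 : lexLE n a b) (h2 : lexLE n c d) : lexLE n (a + c) (b + d) := by
  rcases h1 with rfl | ⟨v1, hv1, hw1⟩
  · rcases h2 with rfl | ⟨v2, hv2, hw2⟩
    · exact Or.inl rfl
    · exact Or.inr ⟨v2, by simp only [Finsupp.add_apply]; omega,
        fun w hw => by simp only [Finsupp.add_apply, hw2 w hw]⟩
  rcases h2 with rfl | ⟨v2, hv2, hw2⟩
  · exact Or.inr ⟨v1, by simp only [Finsupp.add_apply]; omega,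
      fun w hw => by simp only [Finsupp.add_apply, hw1 w hw]⟩
  rcases lt_trichotomy (varRank n v1) (varRank n v2) with h' | h' | h'
  · refine Or.inr ⟨v1, ?_, fun w hw => by
      simp only [Finsupp.add_apply, hw1 w hw, hw2 w (hw.trans h')]⟩
    have := hw2 v1 h'
    simp only [Finsupp.add_apply]; omega
  · rw [varRank_inj h'] at hv1 hw1
    exact Or.inr ⟨v2, by simp only [Finsupp.add_apply]; omega,
      fun w hw => by simp only [Finsupp.add_apply, hw1 w hw, hw2 w hw]⟩
  · refine Or.inr ⟨v2, ?_, fun w hw => by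
      simp only [Finsupp.add_apply, hw1 w (hw.trans h'), hw2 w hw]⟩
    have := hw1 v2 h'
    simp only [Finsupp.add_apply]; omega

lemma lexLE_sum {n : ℕ} {ι : Type*} (s : Finset ι) (f g : ι → ((Fin n × Fin n) →₀ ℕ))
    (h : ∀ i ∈ s, lexLE n (f i) (g i)) :
    lexLE n (∑ i ∈ s, f i) (∑ i ∈ s, g i) := by
  classical
  induction s using Finset.induction_on with
  | empty => simp [lexLE_refl]
  | insert x s hx ih =>
    rw [Finset.sum_insert hx, Finset.sum_insert hx]
    exact lexLE_add (h x (Finset.mem_insert_self x s))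
      (ih fun i hi => h i (Finset.mem_insert_of_mem hi))



variable {K : Type*} [Field K] {n : ℕ}

lemma isUnit_det_genM : IsUnit (genM K n).det := by
  classical
  set U : Matrix (Fin n) (Fin n) (MvPolynomial (Fin n × Fin n) K) :=
    fun i j => genM K n (Fin.revPerm i) j with hU
  have hrev : ∀ i : Fin n, ((Fin.revPerm i : Fin n) : ℕ) = n - 1 - (i : ℕ) := by
    intro i; rw [Fin.revPerm_apply, Fin.val_rev]; omega
  have hgen : genM K n = U.submatrix (⇑Fin.revPerm) id := by
    funext i j
    show genM K n i j = genM K n (Fin.revPerm (Fin.revPerm i)) j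
    simp [hU, Matrix.submatrix_apply, Fin.revPerm_apply, Fin.rev_rev]
  have hdetU : U.det = 1 := by
    rw [Matrix.det_of_lowerTriangular U]
    · apply Finset.prod_eq_one
      intro i _
      have h1 := hrev i
      have h2 := i.isLt
      simp only [hU, genM, h1]
      rw [if_neg (by omega), if_pos (by omega)]
    · intro i j hij
      have hij' : (i : ℕ) < (j : ℕ) := hij
      have h2 := j.isLt
      have h1 := hrev i
      simp only [hU, genM, h1]
      rw [if_neg (by omega), if_neg (by omega)]
  have hdp := Matrix.det_permute (Fin.revPerm) U
  have hdp2 : (genM K n).det =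
      ((Equiv.Perm.sign (Fin.revPerm : Equiv.Perm (Fin n)) : ℤ) : MvPolynomial (Fin n × Fin n) K)
        * U.det := by
    rw [hgen]
    exact hdp
  rw [hdp2, hdetU]
  rcases Int.units_eq_one_or (Equiv.Perm.sign (Fin.revPerm : Equiv.Perm (Fin n))) with h | h <;>
    simp [h]

lemma genM_mul_hessMat : genM K n * hessMat K n = nilpMat K n * genM K n := by
  rw [hessMat, ← Matrix.mul_assoc, ← Matrix.mul_assoc,
    Matrix.mul_nonsing_inv _ isUnit_det_genM, Matrix.one_mul]

lemma nilp_mul_genM_entry (k l : Fin n) :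
    (nilpMat K n * genM K n) k l =
      if hk : (k : ℕ) + 1 < n then genM K n ⟨(k : ℕ) + 1, hk⟩ l else 0 := by
  classical
  rw [Matrix.mul_apply]
  split
  · rename_i hk
    rw [Finset.sum_eq_single (⟨(k : ℕ) + 1, hk⟩ : Fin n)]
    · simp [nilpMat]
    · intro j _ hj
      have : (j : ℕ) ≠ (k : ℕ) + 1 := fun hc => hj (Fin.ext hc)
      simp [nilpMat, this]
    · simp
  · rename_i hk
    apply Finset.sum_eq_zero
    intro j _
    have : (j : ℕ) ≠ (k : ℕ) + 1 := by have := j.isLt; omega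
    simp [nilpMat, this]

/-- The basic recursion for entries of `hessMat`. -/
lemma hess_rec (r l : Fin n) :
    hessMat K n r l =
      (nilpMat K n * genM K n) ⟨n - 1 - (r : ℕ), by have := r.isLt; omega⟩ l -
      ∑ p ∈ Finset.univ.filter (fun p : Fin n => (p : ℕ) < (r : ℕ)),
        X ((⟨n - 1 - (r : ℕ), by have := r.isLt; omega⟩ : Fin n), p) * hessMat K n p l := by
  classical
  have hr := r.isLt
  have key := congrFun (congrFun (genM_mul_hessMat (K := K) (n := n))
    ⟨n - 1 - (r : ℕ), by omega⟩) l
  rw [Matrix.mul_apply] at key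
  have hsum : ∀ p : Fin n,
      genM K n ⟨n - 1 - (r : ℕ), by omega⟩ p * hessMat K n p l =
        (if (p : ℕ) < (r : ℕ) then
          X ((⟨n - 1 - (r : ℕ), by omega⟩ : Fin n), p) * hessMat K n p l else 0) +
        (if p = r then hessMat K n p l else 0) := by
    intro p
    have hp := p.isLt
    simp only [genM]
    rcases lt_trichotomy (p : ℕ) (r : ℕ) with h | h | h
    · rw [if_pos (by omega), if_pos h, if_neg (fun hc => by rw [hc] at h; omega)]
      ring
    · have hpr : p = r := Fin.ext h
      rw [if_neg (by omega), if_pos (by omega), if_neg (by omega), if_pos hpr, one_mul]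
      ring
    · have hpr : p ≠ r := fun hc => by rw [hc] at h; omega
      rw [if_neg (by omega), if_neg (by omega), if_neg (by omega), if_neg hpr, zero_mul]
      ring
  rw [Finset.sum_congr rfl (fun p _ => hsum p), Finset.sum_add_distrib] at key
  rw [Finset.sum_ite_eq' Finset.univ r (fun p => hessMat K n p l)] at key
  simp only [Finset.mem_univ, if_pos] at key
  rw [← Finset.sum_filter] at key
  linear_combination key


lemma varRank_pair (x y : Fin n) : varRank n (x, y) = (x : ℕ) * n + (y : ℕ) := rfl

set_option maxHeartbeats 1000000 in
lemma hess_struct (m : ℕ) : ∀ (r l : Fin n), (r : ℕ) ≤ m →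
    (((r : ℕ) ≤ (l : ℕ) → hessMat K n r l = 0) ∧
    ((r : ℕ) = (l : ℕ) + 1 → hessMat K n r l = 1) ∧
    (∀ a b : Fin n, (a : ℕ) = n - 1 - (r : ℕ) → (b : ℕ) = (l : ℕ) + 1 →
      (l : ℕ) + 2 ≤ (r : ℕ) →
      ∃ g, hessMat K n r l = -X (a, b) + g ∧
        ∀ w ∈ g.vars, varRank n (a, b) < varRank n w)) := by
  classical
  induction m with
  | zero =>
    intro r l hrm
    have hr0 : (r : ℕ) = 0 := by omega
    refine ⟨fun _ => ?_, fun hc => by omega, fun a b _ _ hc => by omega⟩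
    rw [hess_rec r l, Finset.sum_eq_zero (fun p hp => by
      simp only [Finset.mem_filter] at hp; omega), sub_zero, nilp_mul_genM_entry]
    rw [dif_neg (by simp only [Fin.val_mk]; omega)]
  | succ m ihm =>
    intro r l hrm
    by_cases hrm' : (r : ℕ) ≤ m
    · exact ihm r l hrm'
    have hrv : (r : ℕ) = m + 1 := by omega
    have hrn := r.isLt
    have hln := l.isLt
    have hFzero : ∀ p : Fin n, (p : ℕ) < (r : ℕ) → (p : ℕ) ≤ (l : ℕ) →
        hessMat K n p l = 0 := fun p hp hpl => (ihm p l (by omega)).1 hpl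
    refine ⟨?_, ?_, ?_⟩
    · -- r ≤ l
      intro hle
      rw [hess_rec r l, Finset.sum_eq_zero (fun p hp => by
        rw [Finset.mem_filter] at hp
        rw [hFzero p hp.2 (by omega), mul_zero]), sub_zero, nilp_mul_genM_entry]
      have hr1 : 1 ≤ (r : ℕ) := by omega
      rw [dif_pos (by simp only [Fin.val_mk]; omega)]
      simp only [genM, Fin.val_mk]
      rw [if_neg (by omega), if_neg (by omega)]
    · -- r = l + 1
      intro heq
      rw [hess_rec r l, Finset.sum_eq_zero (fun p hp => by
        rw [Finset.mem_filter] at hp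
        rw [hFzero p hp.2 (by omega), mul_zero]), sub_zero, nilp_mul_genM_entry]
      rw [dif_pos (by simp only [Fin.val_mk]; omega)]
      simp only [genM, Fin.val_mk]
      rw [if_neg (by omega), if_pos (by omega)]
    · -- l + 2 ≤ r
      intro a b ha hb hlr
      have hr1 : 1 ≤ (r : ℕ) := by omega
      have hbn : (l : ℕ) + 1 < n := by omega
      set c : Fin n := ⟨n - (r : ℕ), by omega⟩ with hc
      set s₂ : Finset (Fin n) :=
        Finset.univ.filter (fun p : Fin n => (l : ℕ) + 2 ≤ (p : ℕ) ∧ (p : ℕ) < (r : ℕ)) with hs₂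
      have hamk : (⟨n - 1 - (r : ℕ), by omega⟩ : Fin n) = a := by
        apply Fin.ext; simp [ha]
      have hrw : hessMat K n r l = -X (a, b) + (X (c, l) - ∑ p ∈ s₂, X (a, p) * hessMat K n p l) := by
        rw [hess_rec r l]
        rw [hamk]
        rw [nilp_mul_genM_entry]
        rw [dif_pos (by omega : (a : ℕ) + 1 < n)]
        have hgenM : genM K n ⟨(a : ℕ) + 1, by omega⟩ l = X (c, l) := by
          simp only [genM, Fin.val_mk, ha]
          rw [if_pos (by omega)]
          congr 1
          apply Prod.ext
          · apply Fin.ext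
            rw [hc]
            show n - 1 - (r : ℕ) + 1 = n - (r : ℕ)
            omega
          · rfl
        rw [hgenM]
        have hsum : ∑ p ∈ Finset.univ.filter (fun p : Fin n => (p : ℕ) < (r : ℕ)),
              X (a, p) * hessMat K n p l
            = (∑ p ∈ s₂, X (a, p) * hessMat K n p l) + X (a, b) := by
          rw [← Finset.sum_filter_add_sum_filter_not
            (Finset.univ.filter (fun p : Fin n => (p : ℕ) < (r : ℕ)))
            (fun p : Fin n => (l : ℕ) + 1 ≤ (p : ℕ)) (fun p => X (a, p) * hessMat K n p l)]
          have h2 : ∑ p ∈ (Finset.univ.filter (fun p : Fin n => (p : ℕ) < (r : ℕ))).filter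
              (fun p : Fin n => ¬ ((l : ℕ) + 1 ≤ (p : ℕ))), X (a, p) * hessMat K n p l = 0 := by
            apply Finset.sum_eq_zero
            intro p hp
            simp only [Finset.mem_filter] at hp
            rw [hFzero p (by omega) (by omega), mul_zero]
          rw [h2, add_zero]
          have hbmem : b ∈ (Finset.univ.filter (fun p : Fin n => (p : ℕ) < (r : ℕ))).filter
              (fun p : Fin n => (l : ℕ) + 1 ≤ (p : ℕ)) := by
            simp only [Finset.mem_filter, Finset.mem_univ, true_and]
            omega
          rw [Finset.sum_eq_sum_sdiff_singleton_add hbmem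
            (fun p => X (a, p) * hessMat K n p l)]
          have hdiff : (Finset.univ.filter (fun p : Fin n => (p : ℕ) < (r : ℕ))).filter
              (fun p : Fin n => (l : ℕ) + 1 ≤ (p : ℕ)) \ {b} = s₂ := by
            apply Finset.ext
            intro p
            simp only [Finset.mem_sdiff, Finset.mem_filter, Finset.mem_univ, true_and,
              Finset.mem_singleton, hs₂]
            constructor
            · rintro ⟨⟨h1, h2⟩, h3⟩
              have : (p : ℕ) ≠ (b : ℕ) := fun hc' => h3 (Fin.ext hc')
              omega
            · rintro ⟨h1, h2⟩
              refine ⟨⟨h2, by omega⟩, fun hc' => ?_⟩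
              rw [hc'] at h1
              omega
          rw [hdiff]
          have hXb : X (a, b) * hessMat K n b l = X (a, b) := by
            rw [(ihm b l (by omega)).2.1 hb, mul_one]
          rw [hXb]
        rw [hsum]
        ring
      refine ⟨X (c, l) - ∑ p ∈ s₂, X (a, p) * hessMat K n p l, hrw, ?_⟩
      intro w hw
      have hsub := vars_sub_subset (p := X (c, l))
        (q := ∑ p ∈ s₂, X (a, p) * hessMat K n p l) hw
      rw [Finset.mem_union] at hsub
      have hnmul : (n - 1 - (r : ℕ)) * n + n = (n - (r : ℕ)) * n := by
        have : n - 1 - (r : ℕ) + 1 = n - (r : ℕ) := by omega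
        rw [← this, Nat.succ_mul]
      rcases hsub with hw1 | hw2
      · rw [vars_X] at hw1
        rw [Finset.mem_singleton] at hw1
        subst hw1
        rw [varRank_pair, varRank_pair, ha, hb]
        simp only [hc, Fin.val_mk]
        omega
      · have := vars_sum_subset s₂ (fun p => X (a, p) * hessMat K n p l) hw2
        rw [Finset.mem_biUnion] at this
        obtain ⟨p, hps, hwp⟩ := this
        rw [hs₂, Finset.mem_filter] at hps
        obtain ⟨-, hp1, hp2⟩ := hps
        have hwmul := vars_mul (X (a, p)) (hessMat K n p l) hwp
        rw [Finset.mem_union] at hwmul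
        rcases hwmul with hw1 | hw2
        · rw [vars_X, Finset.mem_singleton] at hw1
          subst hw1
          rw [varRank_pair, varRank_pair, hb]
          omega
        · -- w ∈ vars (hessMat p l), l+2 ≤ p < r
          obtain ⟨g', hg'eq, hg'v⟩ := (ihm p l (by omega)).2.2
            ⟨n - 1 - (p : ℕ), by omega⟩ b rfl hb hp1
          have hrank' : varRank n (a, b) <
              varRank n ((⟨n - 1 - (p : ℕ), by omega⟩ : Fin n), b) := by
            have hmul : (n - 1 - (r : ℕ)) * n < (n - 1 - (p : ℕ)) * n :=
              Nat.mul_lt_mul_of_pos_right (by omega) (by omega)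
            show (a : ℕ) * n + (b : ℕ) < (n - 1 - (p : ℕ)) * n + (b : ℕ)
            rw [ha]
            omega
          rw [hg'eq] at hw2
          have := vars_add_subset (-X ((⟨n - 1 - (p : ℕ), by omega⟩ : Fin n), b)) g' hw2
          rw [Finset.mem_union, vars_neg, vars_X, Finset.mem_singleton] at this
          rcases this with h1 | h2
          · rw [h1]; exact hrank'
          · exact hrank'.trans (hg'v w h2)

lemma hess_decomp (r l a b : Fin n) (ha : (a : ℕ) = n - 1 - (r : ℕ))
    (hb : (b : ℕ) = (l : ℕ) + 1) (hlr : (l : ℕ) + 2 ≤ (r : ℕ)) :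
    ∃ g, hessMat K n r l = -X (a, b) + g ∧
      ∀ w ∈ g.vars, varRank n (a, b) < varRank n w :=
  (hess_struct (r : ℕ) r l le_rfl).2.2 a b ha hb hlr

lemma not_mem_vars_coeff_zero {g : MvPolynomial (Fin n × Fin n) K} {v : Fin n × Fin n}
    (hv : v ∉ g.vars) : coeff (Finsupp.single v 1) g = 0 := by
  by_contra hc
  apply hv
  rw [mem_vars]
  exact ⟨Finsupp.single v 1, mem_support_iff.mpr hc, by
    rw [Finsupp.mem_support_iff, Finsupp.single_eq_same]; exact one_ne_zero⟩

lemma rank_lt_not_mem_vars {g : MvPolynomial (Fin n × Fin n) K} {v : Fin n × Fin n}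
    (hg : ∀ w ∈ g.vars, varRank n v < varRank n w) : v ∉ g.vars :=
  fun hc => lt_irrefl _ (hg v hc)

lemma hess_coeff (r l a b : Fin n) (ha : (a : ℕ) = n - 1 - (r : ℕ))
    (hb : (b : ℕ) = (l : ℕ) + 1) (hlr : (l : ℕ) + 2 ≤ (r : ℕ)) :
    coeff (Finsupp.single (a, b) 1) (hessMat K n r l) = -1 := by
  obtain ⟨g, hge, hgv⟩ := hess_decomp (K := K) r l a b ha hb hlr
  rw [hge, coeff_add, coeff_neg, coeff_X,
    not_mem_vars_coeff_zero (rank_lt_not_mem_vars hgv), add_zero, if_pos rfl]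

lemma hess_leadMono (r l a b : Fin n) (ha : (a : ℕ) = n - 1 - (r : ℕ))
    (hb : (b : ℕ) = (l : ℕ) + 1) (hlr : (l : ℕ) + 2 ≤ (r : ℕ)) :
    IsLeadMono (lexLE n) (hessMat K n r l) (Finsupp.single (a, b) 1) := by
  classical
  obtain ⟨g, hge, hgv⟩ := hess_decomp (K := K) r l a b ha hb hlr
  constructor
  · rw [mem_support_iff, hess_coeff r l a b ha hb hlr]
    exact neg_ne_zero.mpr one_ne_zero
  · intro m' hm'
    rw [hge] at hm'
    have := support_add hm'
    rw [Finset.mem_union, support_neg, support_X, Finset.mem_singleton] at this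
    rcases this with rfl | hm'g
    · exact Or.inl rfl
    · have hsupp : ∀ w, m' w ≠ 0 → w ∈ g.vars := fun w hw => by
        rw [mem_vars]
        exact ⟨m', hm'g, Finsupp.mem_support_iff.mpr hw⟩
      refine Or.inr ⟨(a, b), ?_, ?_⟩
      · have h0 : m' (a, b) = 0 := by
          by_contra hc
          exact lt_irrefl _ (hgv _ (hsupp _ hc))
        rw [h0, Finsupp.single_eq_same]
        exact one_pos
      · intro w hw
        have h0 : m' w = 0 := by
          by_contra hc
          exact absurd (hgv _ (hsupp _ hc)) (by omega)
        rw [h0, Finsupp.single_apply, if_neg (fun hc => by rw [← hc] at hw; omega)]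

/-- The set of "special" variables `x_{n-k, l}` (0-indexed) for `k > h l`. -/
def Spec (n : ℕ) (h : ℕ → ℕ) (v : Fin n × Fin n) : Prop :=
  ∃ k l : ℕ, 1 ≤ l ∧ l ≤ n ∧ k ≤ n ∧ h l < k ∧ (v.1 : ℕ) = n - k ∧ (v.2 : ℕ) = l

/-- `gfun v = X v + f_{n - v.1, v.2 + 1}` (0-indexed entry `(n - v.1 - 1, v.2 - 1)`). -/
noncomputable def gfun (K : Type*) [Field K] (n : ℕ) (v : Fin n × Fin n) :
    MvPolynomial (Fin n × Fin n) K :=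
  X v + hessMat K n ⟨n - (v.1 : ℕ) - 1, by have := v.1.isLt; omega⟩
    ⟨(v.2 : ℕ) - 1, by have := v.2.isLt; omega⟩

section WithH

variable (h : ℕ → ℕ)

lemma spec_bounds (hh : ∀ i, 1 ≤ i → i ≤ n → i ≤ h i ∧ h i ≤ n)
    (hindec : ∀ i, 1 ≤ i → i < n → i + 1 ≤ h i)
    {v : Fin n × Fin n} (hv : Spec n h v) :
    1 ≤ (v.2 : ℕ) ∧ (v.2 : ℕ) + 2 ≤ n - (v.1 : ℕ) ∧ (v.1 : ℕ) + 2 ≤ n := by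
  obtain ⟨k, l, hl1, hln, hkn, hhk, hv1, hv2⟩ := hv
  have h1 := (hh l hl1 hln).1
  have hln' : l < n := by omega
  have h2 := hindec l hl1 hln'
  omega

/-- differences of `gfun` at special variables are the generators. -/
lemma hess_eq_gfun_sub (v : Fin n × Fin n) :
    hessMat K n ⟨n - (v.1 : ℕ) - 1, by have := v.1.isLt; omega⟩
      ⟨(v.2 : ℕ) - 1, by have := v.2.isLt; omega⟩ = gfun K n v - X v := by
  rw [gfun, add_sub_cancel_left]

lemma gfun_vars (hh : ∀ i, 1 ≤ i → i ≤ n → i ≤ h i ∧ h i ≤ n)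
    (hindec : ∀ i, 1 ≤ i → i < n → i + 1 ≤ h i)
    {v : Fin n × Fin n} (hv : Spec n h v) :
    ∀ w ∈ (gfun K n v).vars, varRank n v < varRank n w := by
  obtain ⟨hb1, hb2, hb3⟩ := spec_bounds h hh hindec hv
  have h1 := v.1.isLt
  have h2 := v.2.isLt
  obtain ⟨g, hge, hgv⟩ := hess_decomp (K := K)
    (⟨n - (v.1 : ℕ) - 1, by omega⟩ : Fin n) (⟨(v.2 : ℕ) - 1, by omega⟩ : Fin n)
    v.1 v.2 (by simp only [Fin.val_mk]; omega) (by simp only [Fin.val_mk]; omega)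
    (by simp only [Fin.val_mk]; omega)
  have hveq : ((v.1, v.2) : Fin n × Fin n) = v := rfl
  rw [hveq] at hge hgv
  have : gfun K n v = g := by
    rw [gfun, hge]
    ring
  rw [this]
  exact hgv

lemma gen_decomp (hh : ∀ i, 1 ≤ i → i ≤ n → i ≤ h i ∧ h i ≤ n)
    (hindec : ∀ i, 1 ≤ i → i < n → i + 1 ≤ h i)
    {v : Fin n × Fin n} (hv : Spec n h v) :
    coeff (Finsupp.single v 1) (gfun K n v - X v) = -1 ∧
      IsLeadMono (lexLE n) (gfun K n v - X v) (Finsupp.single v 1) := by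
  obtain ⟨hb1, hb2, hb3⟩ := spec_bounds h hh hindec hv
  have h1 := v.1.isLt
  have h2 := v.2.isLt
  rw [← hess_eq_gfun_sub]
  have hveq : ((v.1, v.2) : Fin n × Fin n) = v := rfl
  constructor
  · have := hess_coeff (K := K)
      (⟨n - (v.1 : ℕ) - 1, by omega⟩ : Fin n) (⟨(v.2 : ℕ) - 1, by omega⟩ : Fin n)
      v.1 v.2 (by simp only [Fin.val_mk]; omega) (by simp only [Fin.val_mk]; omega)
      (by simp only [Fin.val_mk]; omega)
    rwa [hveq] at this
  · have := hess_leadMono (K := K)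
      (⟨n - (v.1 : ℕ) - 1, by omega⟩ : Fin n) (⟨(v.2 : ℕ) - 1, by omega⟩ : Fin n)
      v.1 v.2 (by simp only [Fin.val_mk]; omega) (by simp only [Fin.val_mk]; omega)
      (by simp only [Fin.val_mk]; omega)
    rwa [hveq] at this

end WithH

lemma varRank_lt_sq (v : Fin n × Fin n) : varRank n v < n * n := by
  have h1 := v.1.isLt
  have h2 := v.2.isLt
  rw [varRank]
  nlinarith

/-- congruence for aeval on the variables actually occurring. -/
lemma aeval_congr_vars {f g : Fin n × Fin n → MvPolynomial (Fin n × Fin n) K}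
    {p : MvPolynomial (Fin n × Fin n) K} (hfg : ∀ i ∈ p.vars, f i = g i) :
    aeval f p = aeval g p := by
  rw [aeval_def, aeval_def, ← coe_eval₂Hom, ← coe_eval₂Hom]
  exact eval₂Hom_congr' rfl (fun i hi _ => hfg i hi) rfl

end Stmt9

open Classical in
noncomputable def Stmt9.Gdef (K : Type*) [Field K] (n : ℕ) (h : ℕ → ℕ)
    (v : Fin n × Fin n) : MvPolynomial (Fin n × Fin n) K :=
  if Stmt9.Spec n h v then
    MvPolynomial.aeval (fun w =>
      if _hw : varRank n v < varRank n w then Stmt9.Gdef K n h w else MvPolynomial.X w)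
      (Stmt9.gfun K n v)
  else MvPolynomial.X v
termination_by n * n - varRank n v
decreasing_by
  have := Stmt9.varRank_lt_sq w
  omega

namespace Stmt9

variable {K : Type*} [Field K] {n : ℕ} {h : ℕ → ℕ}

lemma Gdef_nonspec {v : Fin n × Fin n} (hv : ¬ Spec n h v) : Gdef K n h v = X v := by
  rw [Gdef, if_neg hv]

lemma Gdef_spec (hh : ∀ i, 1 ≤ i → i ≤ n → i ≤ h i ∧ h i ≤ n)
    (hindec : ∀ i, 1 ≤ i → i < n → i + 1 ≤ h i)
    {v : Fin n × Fin n} (hv : Spec n h v) :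
    Gdef K n h v = aeval (Gdef K n h) (gfun K n v) := by
  rw [Gdef, if_pos hv]
  apply aeval_congr_vars
  intro i hi
  rw [dif_pos (gfun_vars h hh hindec hv i hi)]

lemma Gdef_vars (hh : ∀ i, 1 ≤ i → i ≤ n → i ≤ h i ∧ h i ≤ n)
    (hindec : ∀ i, 1 ≤ i → i < n → i + 1 ≤ h i) :
    ∀ (d : ℕ) (v : Fin n × Fin n), n * n - varRank n v ≤ d →
      ∀ u ∈ (Gdef K n h v).vars, ¬ Spec n h u ∧ varRank n v ≤ varRank n u := by
  classical
  intro d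
  induction d with
  | zero =>
    intro v hd
    have := varRank_lt_sq v
    omega
  | succ d ihd =>
    intro v hd u hu
    by_cases hv : Spec n h v
    · rw [Gdef_spec hh hindec hv, aeval_eq_bind₁] at hu
      have := vars_bind₁ (Gdef K n h) (gfun K n v) hu
      rw [Finset.mem_biUnion] at this
      obtain ⟨i, hi, hui⟩ := this
      have hrank := gfun_vars h hh hindec hv i hi
      have := varRank_lt_sq i
      obtain ⟨h1, h2⟩ := ihd i (by omega) u hui
      exact ⟨h1, by omega⟩
    · rw [Gdef_nonspec hv, vars_X, Finset.mem_singleton] at hu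
      subst hu
      exact ⟨hv, le_rfl⟩

lemma support_prod {ι : Type*} (s : Finset ι) (p : ι → MvPolynomial (Fin n × Fin n) K) :
    ∀ μ ∈ (∏ i ∈ s, p i).support, ∃ f : ι → ((Fin n × Fin n) →₀ ℕ),
      (∀ i ∈ s, f i ∈ (p i).support) ∧ μ = ∑ i ∈ s, f i := by
  classical
  induction s using Finset.induction_on with
  | empty =>
    intro μ hμ
    rw [Finset.prod_empty] at hμ
    have h1 : (1 : MvPolynomial (Fin n × Fin n) K) = monomial 0 1 := by
      rw [monomial_zero', C_1]
    rw [h1, support_monomial, if_neg one_ne_zero, Finset.mem_singleton] at hμ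
    exact ⟨fun _ => 0, fun i hi => absurd hi (Finset.notMem_empty i), by
      rw [hμ, Finset.sum_empty]⟩
  | insert x s hx ih =>
    intro μ hμ
    rw [Finset.prod_insert hx] at hμ
    have := support_mul _ _ hμ
    rw [Finset.mem_add] at this
    obtain ⟨m1, hm1, m2, hm2, hsum⟩ := this
    obtain ⟨f0, hf0, rfl⟩ := ih m2 hm2
    refine ⟨Function.update f0 x m1, ?_, ?_⟩
    · intro i hi
      rcases Finset.mem_insert.mp hi with rfl | his
      · rwa [Function.update_self]
      · rw [Function.update_of_ne (ne_of_mem_of_not_mem his hx)]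
        exact hf0 i his
    · rw [Finset.sum_insert hx, Function.update_self, ← hsum]
      congr 1
      apply Finset.sum_congr rfl
      intro i hi
      rw [Function.update_of_ne (ne_of_mem_of_not_mem hi hx)]

lemma aeval_G_monomial_support (hh : ∀ i, 1 ≤ i → i ≤ n → i ≤ h i ∧ h i ≤ n)
    (hindec : ∀ i, 1 ≤ i → i < n → i + 1 ≤ h i)
    (m' : (Fin n × Fin n) →₀ ℕ) (c' : K) :
    ∀ μ ∈ (aeval (Gdef K n h) (monomial m' c')).support, lexLE n μ m' := by
  classical
  intro μ hμ
  rw [aeval_monomial, algebraMap_eq, ← smul_eq_C_mul] at hμ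
  have hμ2 := Finsupp.support_smul hμ
  rw [Finsupp.prod] at hμ2
  obtain ⟨f, hf, rfl⟩ := support_prod _ _ μ hμ2
  have hm'd : lexLE n (∑ u ∈ m'.support, f u) (∑ u ∈ m'.support, Finsupp.single u (m' u)) := by
    apply lexLE_sum
    intro u hu
    by_cases hsu : Spec n h u
    · have hfu := hf u hu
      have hsupp : ∀ w, (f u) w ≠ 0 → ¬ Spec n h w ∧ varRank n u < varRank n w := by
        intro w hw
        have hwv : w ∈ ((Gdef K n h u) ^ (m' u)).vars :=
          mem_vars w |>.mpr ⟨f u, hfu, Finsupp.mem_support_iff.mpr hw⟩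
        have hwv2 := vars_pow (Gdef K n h u) (m' u) hwv
        obtain ⟨h1, h2⟩ := Gdef_vars hh hindec (n * n) u (Nat.sub_le _ _) w hwv2
        refine ⟨h1, lt_of_le_of_ne h2 ?_⟩
        intro heq
        exact h1 (varRank_inj heq ▸ hsu)
      refine Or.inr ⟨u, ?_, ?_⟩
      · have h0 : (f u) u = 0 := by
          by_contra hc
          exact lt_irrefl _ (hsupp u hc).2
        rw [h0, Finsupp.single_eq_same]
        exact Nat.pos_of_ne_zero (Finsupp.mem_support_iff.mp hu)
      · intro w hw
        have h0 : (f u) w = 0 := by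
          by_contra hc
          have := (hsupp w hc).2
          omega
        rw [h0, Finsupp.single_apply, if_neg (fun hc => by rw [← hc] at hw; omega)]
    · have := hf u hu
      rw [Gdef_nonspec hsu, support_X_pow, Finset.mem_singleton] at this
      rw [this]
      exact lexLE_refl _
  have heq : ∑ u ∈ m'.support, Finsupp.single u (m' u) = m' := Finsupp.sum_single m'
  rwa [heq] at hm'd

lemma aeval_G_monomial_fixed (m' : (Fin n × Fin n) →₀ ℕ) (c' : K)
    (hfree : ∀ u ∈ m'.support, ¬ Spec n h u) :
    aeval (Gdef K n h) (monomial m' c') = monomial m' c' := by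
  rw [aeval_monomial, algebraMap_eq, Finsupp.prod,
    Finset.prod_congr rfl (fun u (hu : u ∈ m'.support) => by
      rw [Gdef_nonspec (hfree u hu)]),
    monomial_eq, Finsupp.prod]

lemma sigma_span_zero (hh : ∀ i, 1 ≤ i → i ≤ n → i ≤ h i ∧ h i ≤ n)
    (hindec : ∀ i, 1 ≤ i → i < n → i + 1 ≤ h i)
    {g : MvPolynomial (Fin n × Fin n) K}
    (hg : g ∈ Ideal.span {g | ∃ v, Spec n h v ∧ g = gfun K n v - X v}) :
    aeval (Gdef K n h) g = 0 := by
  have hker : Ideal.span {g | ∃ v, Spec n h v ∧ g = gfun K n v - X v} ≤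
      RingHom.ker (aeval (Gdef K n h) :
        MvPolynomial (Fin n × Fin n) K →ₐ[K] MvPolynomial (Fin n × Fin n) K).toRingHom := by
    rw [Ideal.span_le]
    rintro x ⟨v, hv, rfl⟩
    rw [SetLike.mem_coe, RingHom.mem_ker]
    show aeval (Gdef K n h) (gfun K n v - X v) = 0
    rw [map_sub, aeval_X, ← Gdef_spec hh hindec hv, sub_self]
  exact hker hg

lemma key_lemma (hh : ∀ i, 1 ≤ i → i ≤ n → i ≤ h i ∧ h i ≤ n)
    (hindec : ∀ i, 1 ≤ i → i < n → i + 1 ≤ h i)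
    {g : MvPolynomial (Fin n × Fin n) K}
    (hg : g ∈ Ideal.span {g | ∃ v, Spec n h v ∧ g = gfun K n v - X v})
    {m : (Fin n × Fin n) →₀ ℕ} (hm : m ∈ g.support)
    (hlead : ∀ m' ∈ g.support, lexLE n m' m) :
    ∃ v, Spec n h v ∧ m v ≠ 0 := by
  by_contra hc
  push_neg at hc
  have hfree : ∀ u ∈ m.support, ¬ Spec n h u := fun u hu hs =>
    Finsupp.mem_support_iff.mp hu (hc u hs)
  have hz := sigma_span_zero hh hindec hg
  have hcoeff : coeff m (aeval (Gdef K n h) g) = coeff m g := by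
    conv_lhs => rw [g.as_sum]
    rw [map_sum, coeff_sum]
    rw [Finset.sum_eq_single m]
    · rw [aeval_G_monomial_fixed m (coeff m g) hfree, coeff_monomial, if_pos rfl]
    · intro m' hm' hne
      by_contra hc2
      have hmem : m ∈ (aeval (Gdef K n h) (monomial m' (coeff m' g))).support :=
        mem_support_iff.mpr hc2
      have h1 := aeval_G_monomial_support hh hindec m' (coeff m' g) m hmem
      exact hne (lexLE_antisymm h1 (hlead m' hm')).symm
    · intro hnm
      exact absurd hm hnm
  rw [hz] at hcoeff
  rw [coeff_zero] at hcoeff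
  exact mem_support_iff.mp hm hcoeff.symm

end Stmt9

open Stmt9

/-- Let `h` be an indecomposable Hessenberg function on `{1,…,n}`
(1-indexed: `i ≤ h i ≤ n`, nondecreasing, `i + 1 ≤ h i` for `i < n`), and let
`I = ⟨ f_{k,ℓ} : k > h(ℓ) ⟩`.  Then with respect to the lexicographic order `lexLE n`
the generators `f_{k,ℓ}`, `k > h(ℓ)`, form a Gröbner basis of `I` (their leading
terms generate the initial ideal of `I`), and `in_<(I)` is generated by the
indeterminates `x_{n+1-k, ℓ+1}` (0-indexed `(n-k, ℓ)`) for `k > h(ℓ)`, which are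
pairwise distinct. -/
theorem stmt9 {K : Type*} [Field K] {n : ℕ} (hn : 3 ≤ n)
    (h : ℕ → ℕ)
    (hh : ∀ i, 1 ≤ i → i ≤ n → i ≤ h i ∧ h i ≤ n)
    (hmono : ∀ i, 1 ≤ i → i < n → h i ≤ h (i + 1))
    (hindec : ∀ i, 1 ≤ i → i < n → i + 1 ≤ h i)
    (I : Ideal (MvPolynomial (Fin n × Fin n) K))
    (hI : I = Ideal.span {g | ∃ k l : ℕ, ∃ (hl1 : 1 ≤ l) (hln : l ≤ n)
      (hkn : k ≤ n) (hhk : h l < k),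
      g = hessMat K n ⟨k - 1, by have := hh l hl1 hln; omega⟩
        ⟨l - 1, by omega⟩}) :
    initialIdeal (lexLE n) I =
      Ideal.span {t | ∃ k l : ℕ, ∃ (hl1 : 1 ≤ l) (hln : l ≤ n)
        (hkn : k ≤ n) (hhk : h l < k), ∃ m,
        IsLeadMono (lexLE n)
          (hessMat K n ⟨k - 1, by have := hh l hl1 hln; omega⟩ ⟨l - 1, by omega⟩) m ∧
        t = MvPolynomial.monomial m (MvPolynomial.coeff m
          (hessMat K n ⟨k - 1, by have := hh l hl1 hln; omega⟩ ⟨l - 1, by omega⟩))} ∧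
    initialIdeal (lexLE n) I =
      Ideal.span {t | ∃ k l : ℕ, ∃ (hl1 : 1 ≤ l) (hln : l ≤ n)
        (hkn : k ≤ n) (hhk : h l < k),
        t = MvPolynomial.X ((⟨n - k, by have := hh l hl1 hln; omega⟩ : Fin n),
          (⟨l, by have := hh l hl1 hln; omega⟩ : Fin n))} ∧
    (∀ k l k' l' : ℕ, 1 ≤ l → l ≤ n → k ≤ n → h l < k →
      1 ≤ l' → l' ≤ n → k' ≤ n → h l' < k' →
      ((n - k : ℕ), l) = ((n - k' : ℕ), l') → k = k' ∧ l = l') := by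
  classical
  subst hI
  -- the generating set, rephrased through `Spec` and `gfun`
  have hgeneq : ∀ (k l : ℕ), 1 ≤ l → l ≤ n → k ≤ n → h l < k →
      ∀ (v : Fin n × Fin n), (v.1 : ℕ) = n - k → (v.2 : ℕ) = l →
      ∀ (p1 : k - 1 < n) (p2 : l - 1 < n),
      hessMat K n ⟨k - 1, p1⟩ ⟨l - 1, p2⟩ = gfun K n v - X v := by
    intro k l hl1 hln hkn hhk v hv1 hv2 p1 p2
    have hl := (hh l hl1 hln).1
    rw [← hess_eq_gfun_sub]
    congr 1
    · apply Fin.ext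
      show k - 1 = n - (v.1 : ℕ) - 1
      omega
    · apply Fin.ext
      show l - 1 = (v.2 : ℕ) - 1
      omega
  have hsetgen : {g | ∃ k l : ℕ, ∃ (hl1 : 1 ≤ l) (hln : l ≤ n)
      (hkn : k ≤ n) (hhk : h l < k),
      g = hessMat K n ⟨k - 1, by have := hh l hl1 hln; omega⟩
        ⟨l - 1, by omega⟩}
      = {g | ∃ v, Spec n h v ∧ g = gfun K n v - X v} := by
    ext g
    simp only [Set.mem_setOf_eq]
    constructor
    · rintro ⟨k, l, hl1, hln, hkn, hhk, rfl⟩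
      have hl := (hh l hl1 hln).1
      refine ⟨(⟨n - k, by omega⟩, ⟨l, by omega⟩), ⟨k, l, hl1, hln, hkn, hhk, rfl, rfl⟩, ?_⟩
      exact hgeneq k l hl1 hln hkn hhk _ rfl rfl _ _
    · rintro ⟨v, hv, rfl⟩
      obtain ⟨k, l, hl1, hln, hkn, hhk, hv1, hv2⟩ := hv
      exact ⟨k, l, hl1, hln, hkn, hhk,
        (hgeneq k l hl1 hln hkn hhk v hv1 hv2 _ _).symm⟩
  -- the single-variable monomial identities
  have hmono_neg : ∀ v : Fin n × Fin n,
      (monomial (Finsupp.single v 1)) (-1 : K) = -X v := by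
    intro v
    have hX : (X v : MvPolynomial (Fin n × Fin n) K) = monomial (Finsupp.single v 1) 1 := rfl
    rw [hX, ← neg_one_smul K ((monomial (Finsupp.single v 1)) (1 : K)),
      ← (monomial (Finsupp.single v 1)).map_smul, smul_eq_mul, mul_one]
  -- conj 2 : the initial ideal is spanned by the special variables
  have h2 : initialIdeal (lexLE n)
      (Ideal.span {g | ∃ k l : ℕ, ∃ (hl1 : 1 ≤ l) (hln : l ≤ n)
        (hkn : k ≤ n) (hhk : h l < k),
        g = hessMat K n ⟨k - 1, by have := hh l hl1 hln; omega⟩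
          ⟨l - 1, by omega⟩}) =
      Ideal.span {t | ∃ k l : ℕ, ∃ (hl1 : 1 ≤ l) (hln : l ≤ n)
        (hkn : k ≤ n) (hhk : h l < k),
        t = MvPolynomial.X ((⟨n - k, by have := hh l hl1 hln; omega⟩ : Fin n),
          (⟨l, by have := hh l hl1 hln; omega⟩ : Fin n))} := by
    rw [hsetgen]
    apply le_antisymm
    · rw [initialIdeal, Ideal.span_le]
      rintro t ⟨g, hgI, m, ⟨hms, hml⟩, rfl⟩
      obtain ⟨v, hv, hmv⟩ := key_lemma hh hindec hgI hms hml
      obtain ⟨k, l, hl1, hln, hkn, hhk, hv1, hv2⟩ := hv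
      have hXv : (X v : MvPolynomial (Fin n × Fin n) K) ∈
          {t | ∃ k l : ℕ, ∃ (hl1 : 1 ≤ l) (hln : l ≤ n)
            (hkn : k ≤ n) (hhk : h l < k),
            t = MvPolynomial.X ((⟨n - k, by have := hh l hl1 hln; omega⟩ : Fin n),
              (⟨l, by have := hh l hl1 hln; omega⟩ : Fin n))} := by
        refine ⟨k, l, hl1, hln, hkn, hhk, ?_⟩
        congr 1
        apply Prod.ext
        · apply Fin.ext
          exact hv1
        · apply Fin.ext
          exact hv2
      have hXmem := Ideal.subset_span hXv
      have heq : monomial m (coeff m g) =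
          monomial (m - Finsupp.single v 1) (coeff m g) * X v := by
        have hX : (X v : MvPolynomial (Fin n × Fin n) K) = monomial (Finsupp.single v 1) 1 := rfl
        rw [hX, monomial_mul, mul_one, tsub_add_cancel_of_le
          (Finsupp.single_le_iff.mpr (Nat.one_le_iff_ne_zero.mpr hmv))]
      rw [SetLike.mem_coe, heq]
      exact Ideal.mul_mem_left _ _ hXmem
    · rw [Ideal.span_le]
      rintro t ⟨k, l, hl1, hln, hkn, hhk, rfl⟩
      set v : Fin n × Fin n := (⟨n - k, by have := hh l hl1 hln; omega⟩,
        ⟨l, by have := hh l hl1 hln; omega⟩) with hvdef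
      have hv : Spec n h v := ⟨k, l, hl1, hln, hkn, hhk, rfl, rfl⟩
      obtain ⟨hcoef, hleadm⟩ := gen_decomp (K := K) h hh hindec hv
      have hgenI : gfun K n v - X v ∈
          Ideal.span {g | ∃ v, Spec n h v ∧ g = gfun K n v - X v} :=
        Ideal.subset_span ⟨v, hv, rfl⟩
      have ht0 : monomial (Finsupp.single v 1)
          (coeff (Finsupp.single v 1) (gfun K n v - X v)) ∈
          initialIdeal (lexLE n)
            (Ideal.span {g | ∃ v, Spec n h v ∧ g = gfun K n v - X v}) :=
        Ideal.subset_span ⟨gfun K n v - X v, hgenI, Finsupp.single v 1, hleadm, rfl⟩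
      rw [hcoef, hmono_neg v] at ht0
      rw [SetLike.mem_coe]
      have : (X v : MvPolynomial (Fin n × Fin n) K) = -(-X v) := (neg_neg _).symm
      rw [show (MvPolynomial.X ((⟨n - k, by have := hh l hl1 hln; omega⟩ : Fin n),
          (⟨l, by have := hh l hl1 hln; omega⟩ : Fin n)) : MvPolynomial (Fin n × Fin n) K)
        = X v from rfl, this]
      exact neg_mem ht0
  refine ⟨?_, h2, ?_⟩
  · -- conj 1
    rw [h2]
    apply le_antisymm
    · rw [Ideal.span_le]
      rintro t ⟨k, l, hl1, hln, hkn, hhk, rfl⟩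
      set v : Fin n × Fin n := (⟨n - k, by have := hh l hl1 hln; omega⟩,
        ⟨l, by have := hh l hl1 hln; omega⟩) with hvdef
      have hv : Spec n h v := ⟨k, l, hl1, hln, hkn, hhk, rfl, rfl⟩
      obtain ⟨hcoef, hleadm⟩ := gen_decomp (K := K) h hh hindec hv
      have hge := hgeneq k l hl1 hln hkn hhk v rfl rfl
        (by have := hh l hl1 hln; omega) (by omega)
      have hmem : monomial (Finsupp.single v 1)
          (coeff (Finsupp.single v 1)
            (hessMat K n ⟨k - 1, by have := hh l hl1 hln; omega⟩ ⟨l - 1, by omega⟩)) ∈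
          {t | ∃ k l : ℕ, ∃ (hl1 : 1 ≤ l) (hln : l ≤ n)
            (hkn : k ≤ n) (hhk : h l < k), ∃ m,
            IsLeadMono (lexLE n)
              (hessMat K n ⟨k - 1, by have := hh l hl1 hln; omega⟩ ⟨l - 1, by omega⟩) m ∧
            t = MvPolynomial.monomial m (MvPolynomial.coeff m
              (hessMat K n ⟨k - 1, by have := hh l hl1 hln; omega⟩ ⟨l - 1, by omega⟩))} := by
        refine ⟨k, l, hl1, hln, hkn, hhk, Finsupp.single v 1, ?_, rfl⟩
        rw [hge]
        exact hleadm
      have h3 := Ideal.subset_span hmem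
      rw [hge, hcoef, hmono_neg v] at h3
      rw [SetLike.mem_coe]
      rw [show (MvPolynomial.X ((⟨n - k, by have := hh l hl1 hln; omega⟩ : Fin n),
          (⟨l, by have := hh l hl1 hln; omega⟩ : Fin n)) : MvPolynomial (Fin n × Fin n) K)
        = X v from rfl, show (X v : MvPolynomial (Fin n × Fin n) K) = -(-X v) from (neg_neg _).symm]
      exact neg_mem h3
    · rw [Ideal.span_le]
      rintro t ⟨k, l, hl1, hln, hkn, hhk, hex⟩
      obtain ⟨m, hm, rfl⟩ := hex
      set v : Fin n × Fin n := (⟨n - k, by have := hh l hl1 hln; omega⟩,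
        ⟨l, by have := hh l hl1 hln; omega⟩) with hvdef
      have hv : Spec n h v := ⟨k, l, hl1, hln, hkn, hhk, rfl, rfl⟩
      obtain ⟨hcoef, hleadm⟩ := gen_decomp (K := K) h hh hindec hv
      have hge := hgeneq k l hl1 hln hkn hhk v rfl rfl
        (by have := hh l hl1 hln; omega) (by omega)
      rw [hge] at hm
      have hm_eq : m = Finsupp.single v 1 :=
        lexLE_antisymm (hleadm.2 m hm.1) (hm.2 _ hleadm.1)
      rw [SetLike.mem_coe, hge, hm_eq, hcoef, hmono_neg v]
      apply neg_mem
      exact Ideal.subset_span ⟨k, l, hl1, hln, hkn, hhk, rfl⟩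
  · -- conj 3
    intro k l k' l' hl1 hln hkn hhk hl1' hln' hkn' hhk' heq
    rw [Prod.mk.injEq] at heq
    have e1 := (hh l hl1 hln).1
    have e2 := (hh l' hl1' hln').1
    omega
end
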